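/- Let d ≥ 1, δ > 0, C > 0, α > 0. There exist α̃ > 0 and C' < ∞ depending only on d, δ, C, α with the following property: for every finite set Λ ⊂ ℤ^d and every symmetric real matrix A = (A_{ij})_{i,j∈Λ} that is strictly diagonally dominant, i.e. Σ_{j∈Λ, j≠i} |A_{ij}| + δ ≤ A_{ii} for all i ∈ Λ, and whose entries satisfy |A_{ij}| ≤ C/(|i−j|^{d+α} + 1) for all i ≠ j, the matrix A is invertible and its inverse satisfies |(A^{-1})_{ij}| ≤ C'/(|i−j|^{d+α̃} + 1) for all i, j ∈ Λ. -/

import Mathlib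

open MeasureTheory Real

noncomputable section

namespace GibbsLSI

lemma one_le_dist_lattice {d : ℕ} {x y : Fin d → ℤ} (h : x ≠ y) : 1 ≤ dist x y := by
  obtain ⟨t, ht⟩ := Function.ne_iff.mp h
  have h1 : (1 : ℤ) ≤ |x t - y t| := Int.one_le_abs (sub_ne_zero.mpr ht)
  have h2 : (1 : ℝ) ≤ dist (x t) (y t) := by
    rw [Int.dist_eq]
    calc (1:ℝ) = ((1:ℤ):ℝ) := by norm_num
    _ ≤ ((|x t - y t| : ℤ) : ℝ) := by exact_mod_cast h1
    _ = |((x t : ℝ) - y t)| := by push_cast [Int.cast_abs]; ring_nf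
  exact h2.trans (dist_le_pi_dist x y t)

lemma pow_entry_nonneg {ι : Type*} [Fintype ι] [DecidableEq ι] (P : Matrix ι ι ℝ)
    (h0 : ∀ i j, 0 ≤ P i j) : ∀ n, ∀ i j, 0 ≤ (P ^ n) i j := by
  intro n
  induction n with
  | zero => intro i j; simp [Matrix.one_apply]; split <;> norm_num
  | succ n ih =>
    intro i j
    rw [pow_succ, Matrix.mul_apply]
    exact Finset.sum_nonneg fun k _ => mul_nonneg (ih i k) (h0 k j)

lemma row_sum_pow_le {ι : Type*} [Fintype ι] [DecidableEq ι] (P : Matrix ι ι ℝ)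
    (h0 : ∀ i j, 0 ≤ P i j) {q : ℝ} (hq : 0 ≤ q) (hrow : ∀ i, ∑ j, P i j ≤ q) :
    ∀ n i, ∑ j, (P ^ n) i j ≤ q ^ n := by
  intro n
  induction n with
  | zero => intro i; simp [Matrix.one_apply]
  | succ n ih =>
    intro i
    have h : ∑ j, (P ^ (n+1)) i j = ∑ k, (P ^ n) i k * (∑ j, P k j) := by
      rw [pow_succ]
      simp only [Matrix.mul_apply, Finset.mul_sum]
      rw [Finset.sum_comm]
    rw [h, pow_succ]
    calc ∑ k, (P ^ n) i k * (∑ j, P k j)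
        ≤ ∑ k, (P ^ n) i k * q := by
          refine Finset.sum_le_sum fun k _ => ?_
          exact mul_le_mul_of_nonneg_left (hrow k) (pow_entry_nonneg P h0 n i k)
      _ = (∑ k, (P ^ n) i k) * q := by rw [Finset.sum_mul]
      _ ≤ q ^ n * q := mul_le_mul_of_nonneg_right (ih i) hq

lemma abs_pow_entry_le {ι : Type*} [Fintype ι] [DecidableEq ι] (N Nb : Matrix ι ι ℝ)
    (h : ∀ i j, |N i j| ≤ Nb i j) : ∀ n, ∀ i j, |(N ^ n) i j| ≤ (Nb ^ n) i j := by
  intro n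
  induction n with
  | zero => intro i j; simp [Matrix.one_apply]; split <;> simp
  | succ n ih =>
    intro i j
    rw [pow_succ, pow_succ, Matrix.mul_apply, Matrix.mul_apply]
    calc |∑ k, (N ^ n) i k * N k j| ≤ ∑ k, |(N ^ n) i k * N k j| := Finset.abs_sum_le_sum_abs _ _
    _ ≤ ∑ k, (Nb ^ n) i k * Nb k j := by
        refine Finset.sum_le_sum fun k _ => ?_
        rw [abs_mul]
        exact mul_le_mul (ih i k) (h k j) (abs_nonneg _) ((abs_nonneg _).trans (ih i k))

set_option maxHeartbeats 1000000 in
lemma lattice_sum_bound (d : ℕ) (hd : 1 ≤ d) (s : ℝ) (hs : (d : ℝ) < s) :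
    ∃ S : ℝ, 0 < S ∧ ∀ (Λ : Finset (Fin d → ℤ)) (x : Fin d → ℤ),
      ∑ k ∈ Λ, 1 / (dist x k ^ s + 1) ≤ S := by
  have hd0 : (0:ℝ) < d := by exact_mod_cast hd
  set p : ℝ := s / d with hp_def
  have hp : 1 < p := (one_lt_div hd0).mpr hs
  have hp0 : 0 < p := lt_trans one_pos hp
  set g : ℤ → ℝ := fun m => 1 / (|(m:ℝ)| ^ p + 1) with hg_def
  have hg0 : ∀ m, 0 ≤ g m := by intro m; positivity
  have hgsum : Summable g := by
    have h1 : Summable (fun n : ℤ => 1 / |(n:ℝ)| ^ p) := by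
      have := (Real.summable_one_div_int_add_rpow 0 p).mpr hp
      simpa using this
    have h2 : Summable (Function.update (fun n : ℤ => 1 / |(n:ℝ)| ^ p) 0 1) := h1.update 0 1
    refine Summable.of_nonneg_of_le hg0 (fun m => ?_) h2
    by_cases hm : m = 0
    · subst hm
      rw [Function.update_self]
      show (1:ℝ)/(|((0:ℤ):ℝ)| ^ p + 1) ≤ 1
      rw [Int.cast_zero, abs_zero, Real.zero_rpow (ne_of_gt hp0), zero_add]
      norm_num
    · rw [Function.update_of_ne hm]
      have habs : (1:ℝ) ≤ |(m:ℝ)| := by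
        have : (1:ℤ) ≤ |m| := Int.one_le_abs hm
        calc (1:ℝ) = ((1:ℤ):ℝ) := by norm_num
        _ ≤ ((|m|:ℤ):ℝ) := by exact_mod_cast this
        _ = |(m:ℝ)| := by push_cast; ring
      have hpos : (0:ℝ) < |(m:ℝ)| ^ p := rpow_pos_of_pos (by linarith) p
      exact one_div_le_one_div_of_le hpos (by linarith)
  set T : ℝ := max 1 (∑' m, g m) with hT_def
  have hT1 : (1:ℝ) ≤ T := le_max_left _ _
  have hgT : ∀ F : Finset ℤ, ∑ m ∈ F, g m ≤ T := fun F =>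
    (Summable.sum_le_tsum F (fun m _ => hg0 m) hgsum).trans (le_max_right _ _)
  refine ⟨2 ^ d * T ^ d, by positivity, ?_⟩
  intro Λ x
  -- pointwise bound
  have hpt : ∀ k : Fin d → ℤ, 1 / (dist x k ^ s + 1) ≤ 2 ^ d * ∏ t, g (x t - k t) := by
    intro k
    set D0 : ℝ := dist x k with hD0_def
    have hD0 : 0 ≤ D0 := dist_nonneg
    set P : ℝ := ∏ t, (|((x t - k t : ℤ) : ℝ)| ^ p + 1) with hP_def
    have hfac_pos : ∀ t : Fin d, (0:ℝ) < |((x t - k t : ℤ) : ℝ)| ^ p + 1 := by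
      intro t; positivity
    have hP0 : 0 < P := Finset.prod_pos (fun t _ => hfac_pos t)
    have hkey : P ≤ 2 ^ d * (D0 ^ s + 1) := by
      have hfac : ∀ t : Fin d, |((x t - k t : ℤ) : ℝ)| ^ p + 1 ≤ D0 ^ p + 1 := by
        intro t
        have h1 : |((x t - k t : ℤ) : ℝ)| = dist (x t) (k t) := by
          rw [Int.dist_eq]; push_cast; ring_nf
        have h2 : dist (x t) (k t) ≤ D0 := dist_le_pi_dist x k t
        have : |((x t - k t : ℤ) : ℝ)| ^ p ≤ D0 ^ p :=
          Real.rpow_le_rpow (abs_nonneg _) (h1 ▸ h2) (le_of_lt hp0)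
        linarith
      have hP1 : P ≤ (D0 ^ p + 1) ^ d := by
        calc P ≤ ∏ _t : Fin d, (D0 ^ p + 1) :=
              Finset.prod_le_prod (fun t _ => (hfac_pos t).le) (fun t _ => hfac t)
        _ = (D0 ^ p + 1) ^ d := by rw [Finset.prod_const, Finset.card_univ, Fintype.card_fin]
      have hps : (D0 ^ p) ^ d = D0 ^ s := by
        rw [← Real.rpow_natCast (D0 ^ p) d, ← Real.rpow_mul hD0]
        congr 1
        rw [hp_def]
        field_simp
      rcases le_total (D0 ^ p) 1 with hle | hle
      · have : (D0 ^ p + 1) ^ d ≤ 2 ^ d := by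
          apply pow_le_pow_left₀ (by positivity) (by linarith)
        have h1 : (1:ℝ) ≤ D0 ^ s + 1 := by
          have : 0 ≤ D0 ^ s := Real.rpow_nonneg hD0 s
          linarith
        calc P ≤ 2 ^ d := hP1.trans this
        _ = 2 ^ d * 1 := by ring
        _ ≤ 2 ^ d * (D0 ^ s + 1) := by
            apply mul_le_mul_of_nonneg_left h1 (by positivity)
      · have : (D0 ^ p + 1) ^ d ≤ (2 * D0 ^ p) ^ d := by
          apply pow_le_pow_left₀ (by positivity) (by linarith)
        calc P ≤ (2 * D0 ^ p) ^ d := hP1.trans this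
        _ = 2 ^ d * (D0 ^ p) ^ d := by rw [mul_pow]
        _ = 2 ^ d * D0 ^ s := by rw [hps]
        _ ≤ 2 ^ d * (D0 ^ s + 1) := by nlinarith [pow_pos (zero_lt_two (α := ℝ)) d]
    have hprod_g : ∏ t, g (x t - k t) = 1 / P := by
      rw [eq_div_iff hP0.ne']
      rw [hP_def, ← Finset.prod_mul_distrib]
      apply Finset.prod_eq_one
      intro t _
      exact one_div_mul_cancel (hfac_pos t).ne'
    rw [hprod_g, mul_one_div]
    rw [div_le_div_iff₀ (by positivity) hP0, one_mul]
    exact hkey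
  calc ∑ k ∈ Λ, 1 / (dist x k ^ s + 1)
      ≤ ∑ k ∈ Λ, 2 ^ d * ∏ t, g (x t - k t) :=
        Finset.sum_le_sum fun k _ => hpt k
    _ = 2 ^ d * ∑ k ∈ Λ, ∏ t, g (x t - k t) := by rw [Finset.mul_sum]
    _ ≤ 2 ^ d * T ^ d := by
        have hsub : Λ ⊆ Fintype.piFinset (fun t => Λ.image (fun k => k t)) := by
          intro k hk
          rw [Fintype.mem_piFinset]
          exact fun t => Finset.mem_image.mpr ⟨k, hk, rfl⟩
        have h1 : ∑ k ∈ Λ, ∏ t, g (x t - k t)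
            ≤ ∑ k ∈ Fintype.piFinset (fun t => Λ.image (fun k => k t)), ∏ t, g (x t - k t) :=
          Finset.sum_le_sum_of_subset_of_nonneg hsub
            (fun k _ _ => Finset.prod_nonneg fun t _ => hg0 _)
        have h2 : ∑ k ∈ Fintype.piFinset (fun t => Λ.image (fun k => k t)), ∏ t, g (x t - k t)
            = ∏ t, ∑ m ∈ Λ.image (fun k => k t), g (x t - m) :=
          (Finset.prod_univ_sum (fun t => Λ.image (fun k => k t)) (fun t m => g (x t - m))).symm
        have h3 : ∀ t : Fin d, ∑ m ∈ Λ.image (fun k => k t), g (x t - m) ≤ T := by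
          intro t
          have hinj : ∀ a ∈ Λ.image (fun k => k t), ∀ b ∈ Λ.image (fun k => k t),
              x t - a = x t - b → a = b := fun a _ b _ h => by omega
          have : ∑ m ∈ Λ.image (fun k => k t), g (x t - m)
              = ∑ m' ∈ (Λ.image (fun k => k t)).image (fun m => x t - m), g m' :=
            (Finset.sum_image hinj).symm
          rw [this]
          exact hgT _
        have h4 : ∏ t, ∑ m ∈ Λ.image (fun k => k t), g (x t - m) ≤ T ^ d := by
          calc ∏ t, ∑ m ∈ Λ.image (fun k => k t), g (x t - m)
              ≤ ∏ _t : Fin d, T := Finset.prod_le_prod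
                (fun t _ => Finset.sum_nonneg fun m _ => hg0 _) (fun t _ => h3 t)
          _ = T ^ d := by rw [Finset.prod_const, Finset.card_univ, Fintype.card_fin]
        apply mul_le_mul_of_nonneg_left _ (by positivity : (0:ℝ) ≤ 2 ^ d)
        exact h1.trans (h2 ▸ h4)

set_option maxHeartbeats 2000000 in
/-- a symmetric, strictly diagonally dominant matrix indexed by a finite
subset of the lattice whose off-diagonal entries decay algebraically is invertible,
and its inverse also has algebraically decaying entries, with exponent and constant
depending only on `d`, `δ`, `C`, `α`. -/
theorem inverse_matrix_decay
    (d : ℕ) (hd : 1 ≤ d) (δ C α : ℝ) (hδ : 0 < δ) (hC : 0 < C) (hα : 0 < α) :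
    ∃ α' C' : ℝ, 0 < α' ∧ 0 < C' ∧
      ∀ (Λ : Finset (Fin d → ℤ)) (A : Matrix ↥Λ ↥Λ ℝ),
        (∀ i j, A i j = A j i) →
        (∀ i : ↥Λ, (∑ j ∈ Finset.univ.erase i, |A i j|) + δ ≤ A i i) →
        (∀ i j, i ≠ j → |A i j| ≤ C / (dist i.1 j.1 ^ ((d : ℝ) + α) + 1)) →
        IsUnit A ∧
          ∀ i j, |A⁻¹ i j| ≤ C' / (dist i.1 j.1 ^ ((d : ℝ) + α') + 1) := by
  set s : ℝ := (d : ℝ) + α with hs_def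
  have hd1 : (1:ℝ) ≤ d := by exact_mod_cast hd
  have hs0 : 0 < s := by rw [hs_def]; linarith
  obtain ⟨S, hS0, hS⟩ := lattice_sum_bound d hd s (by rw [hs_def]; linarith)
  set K : ℝ := C * S with hK_def
  have hK0 : 0 < K := mul_pos hC hS0
  set q : ℝ := K / (K + δ) with hq_def
  have hq0 : 0 < q := div_pos hK0 (by linarith)
  have hq1 : q < 1 := by rw [hq_def, div_lt_one (by linarith)]; linarith
  have h1q : 0 < 1 - q := by linarith
  set k₀ : ℕ := ⌈s⌉₊ with hk0_def
  have hsum2 : Summable (fun n : ℕ => (n:ℝ) ^ (k₀+1) * q ^ n) := by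
    apply summable_pow_mul_geometric_of_norm_lt_one
    rw [Real.norm_eq_abs, abs_of_pos hq0]; exact hq1
  set T2 : ℝ := ∑' n : ℕ, (n:ℝ) ^ (k₀+1) * q ^ n with hT2_def
  have hT2_0 : 0 ≤ T2 := tsum_nonneg (fun n => by positivity)
  have hT2sum : ∀ M : ℕ, ∑ n ∈ Finset.range M, (n:ℝ) ^ (k₀+1) * q ^ n ≤ T2 :=
    fun M => Summable.sum_le_tsum _ (fun n _ => by positivity) hsum2
  set C' : ℝ := 2 * (C / δ^2) * (T2 / q) + 1 / (δ * (1 - q)) with hC'_def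
  have hC'0 : 0 < C' := by
    rw [hC'_def]
    have h1 : (0:ℝ) ≤ 2 * (C / δ^2) * (T2 / q) := by positivity
    have h2 : (0:ℝ) < 1 / (δ * (1 - q)) := by positivity
    linarith
  refine ⟨α, C', hα, hC'0, ?_⟩
  intro Λ A hsym hdom hdecay
  rw [← hs_def]
  -- basic positivity facts
  have hAδ : ∀ i, δ ≤ A i i := by
    intro i
    have h := hdom i
    have h2 : 0 ≤ ∑ j ∈ Finset.univ.erase i, |A i j| :=
      Finset.sum_nonneg fun j _ => abs_nonneg _
    linarith
  have hApos : ∀ i, 0 < A i i := fun i => lt_of_lt_of_le hδ (hAδ i)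
  have hrowδ : ∀ i, ∑ j ∈ Finset.univ.erase i, |A i j| ≤ A i i - δ := fun i => by
    linarith [hdom i]
  have hrowK : ∀ i : ↥Λ, ∑ j ∈ Finset.univ.erase i, |A i j| ≤ K := by
    intro i
    have h1 : ∀ j ∈ Finset.univ.erase i, |A i j| ≤ C * (1 / (dist i.1 j.1 ^ s + 1)) := by
      intro j hj
      rw [mul_one_div]
      exact hdecay i j (Finset.ne_of_mem_erase hj).symm
    calc ∑ j ∈ Finset.univ.erase i, |A i j|
        ≤ ∑ j ∈ Finset.univ.erase i, C * (1 / (dist i.1 j.1 ^ s + 1)) := Finset.sum_le_sum h1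
      _ ≤ ∑ j : ↥Λ, C * (1 / (dist i.1 j.1 ^ s + 1)) :=
          Finset.sum_le_sum_of_subset_of_nonneg (Finset.erase_subset _ _)
            (fun j _ _ => by positivity)
      _ = C * ∑ j : ↥Λ, 1 / (dist i.1 j.1 ^ s + 1) := by rw [Finset.mul_sum]
      _ = C * ∑ x ∈ Λ, 1 / (dist i.1 x ^ s + 1) := by
          rw [Finset.sum_coe_sort Λ (fun x => 1 / (dist i.1 x ^ s + 1))]
      _ ≤ C * S := mul_le_mul_of_nonneg_left (hS Λ i.1) hC.le
  have hrowq : ∀ i, ∑ j ∈ Finset.univ.erase i, |A i j| ≤ q * A i i := by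
    intro i
    rw [hq_def, div_mul_eq_mul_div, le_div_iff₀ (by linarith : (0:ℝ) < K + δ)]
    nlinarith [hrowK i, hrowδ i, hApos i]
  -- the comparison matrices
  set Nm : Matrix ↥Λ ↥Λ ℝ := Matrix.of (fun i k => if i = k then 0 else -(A i k) / A i i)
    with hNm_def
  set Nb : Matrix ↥Λ ↥Λ ℝ := Matrix.of (fun i k => if i = k then 0 else |A i k| / A i i)
    with hNb_def
  set D' : Matrix ↥Λ ↥Λ ℝ := Matrix.diagonal (fun i => (A i i)⁻¹) with hD'_def
  have hNbeq : ∀ i k, Nb i k = if i = k then 0 else |A i k| / A i i := fun i k => rfl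
  have hNmeq : ∀ i k, Nm i k = if i = k then 0 else -(A i k) / A i i := fun i k => rfl
  have hNb0 : ∀ i k, 0 ≤ Nb i k := by
    intro i k
    rw [hNbeq]
    split
    · exact le_refl _
    · exact div_nonneg (abs_nonneg _) (hApos i).le
  have hNabs : ∀ i k, |Nm i k| ≤ Nb i k := by
    intro i k
    rw [hNbeq, hNmeq]
    split
    · simp
    · rw [abs_div, abs_neg, abs_of_pos (hApos i)]
  have hNbrow : ∀ i, ∑ k, Nb i k ≤ q := by
    intro i
    have hdiag : Nb i i = 0 := by rw [hNbeq]; simp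
    have hsplit : ∑ k, Nb i k = ∑ k ∈ Finset.univ.erase i, Nb i k := by
      rw [← Finset.add_sum_erase _ _ (Finset.mem_univ i), hdiag, zero_add]
    have heq : ∑ k ∈ Finset.univ.erase i, Nb i k
        = (∑ k ∈ Finset.univ.erase i, |A i k|) / A i i := by
      rw [Finset.sum_div]
      refine Finset.sum_congr rfl fun k hk => ?_
      rw [hNbeq, if_neg (Finset.ne_of_mem_erase hk).symm]
    rw [hsplit, heq, div_le_iff₀ (hApos i)]
    exact hrowq i
  -- invertibility
  have hdet : A.det ≠ 0 := by
    intro h0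
    obtain ⟨v, hv0, hv⟩ := Matrix.exists_mulVec_eq_zero_iff.mpr h0
    obtain ⟨t0, ht0⟩ := Function.ne_iff.mp hv0
    have hne : Nonempty ↥Λ := ⟨t0⟩
    obtain ⟨i, hi⟩ := Finite.exists_max (fun k : ↥Λ => |v k|)
    have hvi : 0 < |v i| := lt_of_lt_of_le (abs_pos.mpr ht0) (hi t0)
    have hmv : ∑ k, A i k * v k = 0 := by
      have := congrFun hv i
      rwa [Matrix.mulVec, dotProduct] at this
    have hsplit : A i i * v i + ∑ k ∈ Finset.univ.erase i, A i k * v k = 0 := by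
      rw [← Finset.add_sum_erase Finset.univ (fun k => A i k * v k)
        (Finset.mem_univ i)] at hmv
      exact hmv
    have habs : A i i * |v i| ≤ (A i i - δ) * |v i| := by
      have h1 : A i i * v i = -(∑ k ∈ Finset.univ.erase i, A i k * v k) := by linarith
      calc A i i * |v i| = |A i i * v i| := by rw [abs_mul, abs_of_pos (hApos i)]
        _ = |∑ k ∈ Finset.univ.erase i, A i k * v k| := by rw [h1, abs_neg]
        _ ≤ ∑ k ∈ Finset.univ.erase i, |A i k * v k| := Finset.abs_sum_le_sum_abs _ _
        _ ≤ ∑ k ∈ Finset.univ.erase i, |A i k| * |v i| := by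
            refine Finset.sum_le_sum fun k _ => ?_
            rw [abs_mul]
            exact mul_le_mul_of_nonneg_left (hi k) (abs_nonneg _)
        _ = (∑ k ∈ Finset.univ.erase i, |A i k|) * |v i| := by rw [Finset.sum_mul]
        _ ≤ (A i i - δ) * |v i| :=
            mul_le_mul_of_nonneg_right (hrowδ i) (abs_nonneg _)
    nlinarith
  have hudet : IsUnit A.det := isUnit_iff_ne_zero.mpr hdet
  have hUnit : IsUnit A := (Matrix.isUnit_iff_isUnit_det A).mpr hudet
  refine ⟨hUnit, ?_⟩
  have hAinv : A * A⁻¹ = 1 := Matrix.mul_nonsing_inv A hudet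
  -- factorization A = D (1 - Nm)
  have hfact : A = Matrix.diagonal (fun i => A i i) * (1 - Nm) := by
    ext i j
    rw [Matrix.diagonal_mul, Matrix.sub_apply, Matrix.one_apply, hNmeq]
    by_cases h : i = j
    · subst h; simp
    · rw [if_neg h, if_neg h]
      field_simp [(hApos i).ne']
      ring
  have hDD' : Matrix.diagonal (fun i : ↥Λ => A i i) * D' = 1 := by
    rw [hD'_def, Matrix.diagonal_mul_diagonal]
    rw [show (fun i : ↥Λ => A i i * (A i i)⁻¹) = fun _ => (1:ℝ) from
      funext fun i => mul_inv_cancel₀ (hApos i).ne', Matrix.diagonal_one]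
  have hD'D : D' * Matrix.diagonal (fun i : ↥Λ => A i i) = 1 := by
    rw [hD'_def, Matrix.diagonal_mul_diagonal]
    rw [show (fun i : ↥Λ => (A i i)⁻¹ * A i i) = fun _ => (1:ℝ) from
      funext fun i => inv_mul_cancel₀ (hApos i).ne', Matrix.diagonal_one]
  have hone : (1 - Nm) * A⁻¹ = D' := by
    have h1 : Matrix.diagonal (fun i : ↥Λ => A i i) * ((1 - Nm) * A⁻¹) = 1 := by
      rw [← Matrix.mul_assoc, ← hfact, hAinv]
    calc (1 - Nm) * A⁻¹ = 1 * ((1 - Nm) * A⁻¹) := (one_mul _).symm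
      _ = (D' * Matrix.diagonal (fun i : ↥Λ => A i i)) * ((1 - Nm) * A⁻¹) := by rw [hD'D]
      _ = D' * (Matrix.diagonal (fun i : ↥Λ => A i i) * ((1 - Nm) * A⁻¹)) :=
          Matrix.mul_assoc _ _ _
      _ = D' * 1 := by rw [h1]
      _ = D' := by rw [Matrix.mul_one]
  have hrep : ∀ M : ℕ, A⁻¹ = (∑ n ∈ Finset.range M, Nm ^ n) * D' + Nm ^ M * A⁻¹ := by
    intro M
    have hg : (∑ n ∈ Finset.range M, Nm ^ n) * (1 - Nm) = 1 - Nm ^ M := by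
      have h := geom_sum_mul Nm M
      have h2 : (∑ n ∈ Finset.range M, Nm ^ n) * (1 - Nm)
          = -((∑ n ∈ Finset.range M, Nm ^ n) * (Nm - 1)) := by noncomm_ring
      rw [h2, h]; noncomm_ring
    calc A⁻¹ = (1 - Nm ^ M) * A⁻¹ + Nm ^ M * A⁻¹ := by noncomm_ring
      _ = ((∑ n ∈ Finset.range M, Nm ^ n) * (1 - Nm)) * A⁻¹ + Nm ^ M * A⁻¹ := by rw [hg]
      _ = (∑ n ∈ Finset.range M, Nm ^ n) * ((1 - Nm) * A⁻¹) + Nm ^ M * A⁻¹ := by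
          rw [Matrix.mul_assoc]
      _ = (∑ n ∈ Finset.range M, Nm ^ n) * D' + Nm ^ M * A⁻¹ := by rw [hone]
  have hentry : ∀ (M : ℕ) (i j : ↥Λ),
      A⁻¹ i j = (∑ n ∈ Finset.range M, (Nm ^ n * D') i j) + (Nm ^ M * A⁻¹) i j := by
    intro M i j
    conv_lhs => rw [hrep M]
    rw [Matrix.add_apply, Finset.sum_mul, Matrix.sum_apply]
  set G : ℝ := ∑ k, ∑ l, |A⁻¹ k l| with hG_def
  have hG0 : 0 ≤ G :=
    Finset.sum_nonneg fun k _ => Finset.sum_nonneg fun l _ => abs_nonneg _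
  have hGkl : ∀ k l, |A⁻¹ k l| ≤ G := by
    intro k l
    calc |A⁻¹ k l| ≤ ∑ l', |A⁻¹ k l'| :=
          Finset.single_le_sum (f := fun l' => |A⁻¹ k l'|)
            (fun _ _ => abs_nonneg _) (Finset.mem_univ l)
      _ ≤ G := Finset.single_le_sum (f := fun k' => ∑ l', |A⁻¹ k' l'|)
          (fun _ _ => Finset.sum_nonneg fun _ _ => abs_nonneg _) (Finset.mem_univ k)
  have habspow := abs_pow_entry_le Nm Nb hNabs
  have hNbpow0 := pow_entry_nonneg Nb hNb0
  have hNbrowpow := row_sum_pow_le Nb hNb0 hq0.le hNbrow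
  have hrem : ∀ (M : ℕ) (i j : ↥Λ), |(Nm ^ M * A⁻¹) i j| ≤ q ^ M * G := by
    intro M i j
    rw [Matrix.mul_apply]
    calc |∑ k, (Nm ^ M) i k * A⁻¹ k j| ≤ ∑ k, |(Nm ^ M) i k * A⁻¹ k j| :=
          Finset.abs_sum_le_sum_abs _ _
      _ ≤ ∑ k, (Nb ^ M) i k * G := by
          refine Finset.sum_le_sum fun k _ => ?_
          rw [abs_mul]
          exact mul_le_mul (habspow M i k) (hGkl k j) (abs_nonneg _)
            ((abs_nonneg _).trans (habspow M i k))
      _ = (∑ k, (Nb ^ M) i k) * G := by rw [Finset.sum_mul]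
      _ ≤ q ^ M * G := mul_le_mul_of_nonneg_right (hNbrowpow M i) hG0
  -- entry formulas
  have hMnentry : ∀ (n : ℕ) (i j : ↥Λ), (Nb ^ n * D') i j = (Nb ^ n) i j * (A j j)⁻¹ := by
    intro n i j; rw [hD'_def, Matrix.mul_diagonal]
  have hNmDentry : ∀ (n : ℕ) (i j : ↥Λ),
      |(Nm ^ n * D') i j| = |(Nm ^ n) i j| * (A j j)⁻¹ := by
    intro n i j
    rw [hD'_def, Matrix.mul_diagonal, abs_mul, abs_of_pos (inv_pos.mpr (hApos j))]
  have hMn0 : ∀ (n : ℕ) (i j : ↥Λ), 0 ≤ (Nb ^ n * D') i j := by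
    intro n i j
    rw [hMnentry]
    exact mul_nonneg (hNbpow0 n i j) (inv_nonneg.mpr (hApos j).le)
  have hNmD_le : ∀ (n : ℕ) (i j : ↥Λ), |(Nm ^ n * D') i j| ≤ (Nb ^ n * D') i j := by
    intro n i j
    rw [hNmDentry, hMnentry]
    exact mul_le_mul_of_nonneg_right (habspow n i j) (inv_nonneg.mpr (hApos j).le)
  -- symmetry of Nb^n * D'
  set Bb : Matrix ↥Λ ↥Λ ℝ := Matrix.of (fun i k => if i = k then 0 else |A i k|) with hBb_def
  have hBbeq : ∀ i k, Bb i k = if i = k then 0 else |A i k| := fun i k => rfl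
  have hNbfact : Nb = D' * Bb := by
    ext i k
    rw [hD'_def, Matrix.diagonal_mul, hNbeq, hBbeq]
    split
    · rw [mul_zero]
    · rw [inv_mul_eq_div]
  have hBbsym : Bb.transpose = Bb := by
    ext i k
    rw [Matrix.transpose_apply, hBbeq, hBbeq]
    by_cases h : i = k
    · subst h; simp
    · rw [if_neg h, if_neg (Ne.symm h), hsym]
  have hD'sym : D'.transpose = D' := by rw [hD'_def, Matrix.diagonal_transpose]
  have hcomm : ∀ n : ℕ, (D' * Bb) ^ n * D' = D' * (Bb * D') ^ n := by
    intro n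
    induction n with
    | zero => simp
    | succ n ih =>
      rw [pow_succ', Matrix.mul_assoc, ih, pow_succ', ← Matrix.mul_assoc,
        ← Matrix.mul_assoc, ← Matrix.mul_assoc]
  have hMnsym : ∀ (n : ℕ) (i j : ↥Λ), (Nb ^ n * D') i j = (Nb ^ n * D') j i := by
    intro n i j
    have h : (Nb ^ n * D').transpose = Nb ^ n * D' := by
      rw [Matrix.transpose_mul, Matrix.transpose_pow, hD'sym, hNbfact,
        Matrix.transpose_mul, hBbsym, hD'sym, ← hcomm n]
    calc (Nb ^ n * D') i j = (Nb ^ n * D').transpose j i := (Matrix.transpose_apply _ _ _).symm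
      _ = (Nb ^ n * D') j i := by rw [h]
  have hMncol : ∀ (n : ℕ) (j : ↥Λ), ∑ k, (Nb ^ n * D') k j ≤ q ^ n / δ := by
    intro n j
    have h1 : ∑ k, (Nb ^ n * D') k j = ∑ k, (Nb ^ n * D') j k :=
      Finset.sum_congr rfl fun k _ => hMnsym n k j
    rw [h1]
    calc ∑ k, (Nb ^ n * D') j k = ∑ k, (Nb ^ n) j k * (A k k)⁻¹ :=
          Finset.sum_congr rfl fun k _ => hMnentry n j k
      _ ≤ ∑ k, (Nb ^ n) j k * δ⁻¹ := by
          refine Finset.sum_le_sum fun k _ => ?_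
          exact mul_le_mul_of_nonneg_left (inv_anti₀ hδ (hAδ k)) (hNbpow0 n j k)
      _ = (∑ k, (Nb ^ n) j k) * δ⁻¹ := by rw [Finset.sum_mul]
      _ ≤ q ^ n * δ⁻¹ := mul_le_mul_of_nonneg_right (hNbrowpow n j) (inv_nonneg.mpr hδ.le)
      _ = q ^ n / δ := (div_eq_mul_inv _ _).symm
  have hdist1 : ∀ (i j : ↥Λ), i ≠ j → 1 ≤ dist i.1 j.1 := fun i j hij =>
    one_le_dist_lattice (fun h => hij (Subtype.ext h))
  -- THE KEY INDUCTION
  have hkey : ∀ (m : ℕ) (i j : ↥Λ), i ≠ j →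
      (Nb ^ (m+1) * D') i j
        ≤ (C / δ^2) * ((m:ℝ)+1) ^ (s+1) * q ^ m / dist i.1 j.1 ^ s := by
    intro m
    induction m with
    | zero =>
      intro i j hij
      have hr1 : 1 ≤ dist i.1 j.1 := hdist1 i j hij
      have hr0 : (0:ℝ) < dist i.1 j.1 := lt_of_lt_of_le one_pos hr1
      have hrs0 : 0 < dist i.1 j.1 ^ s := rpow_pos_of_pos hr0 s
      have h1 : (Nb ^ 1 * D') i j = |A i j| * (A i i)⁻¹ * (A j j)⁻¹ := by
        rw [hMnentry, pow_one, hNbeq, if_neg hij, div_eq_mul_inv]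
      rw [h1]
      have h2 : |A i j| ≤ C / dist i.1 j.1 ^ s := by
        refine (hdecay i j hij).trans ?_
        exact div_le_div_of_nonneg_left hC.le hrs0 (by linarith)
      have h3 : (A i i)⁻¹ ≤ δ⁻¹ := inv_anti₀ hδ (hAδ i)
      have h4 : (A j j)⁻¹ ≤ δ⁻¹ := inv_anti₀ hδ (hAδ j)
      calc |A i j| * (A i i)⁻¹ * (A j j)⁻¹
          ≤ (C / dist i.1 j.1 ^ s) * δ⁻¹ * δ⁻¹ := by
            apply mul_le_mul (mul_le_mul h2 h3 (inv_nonneg.mpr (hApos i).le)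
              (by positivity)) h4 (inv_nonneg.mpr (hApos j).le) (by positivity)
        _ = (C / δ^2) * (((0:ℕ):ℝ)+1) ^ (s+1) * q ^ 0 / dist i.1 j.1 ^ s := by
            rw [Nat.cast_zero, zero_add, Real.one_rpow, pow_zero, mul_one, mul_one]
            simp only [div_eq_mul_inv, mul_inv, pow_two]
            ring
    | succ m ih =>
      intro i j hij
      have hr1 : 1 ≤ dist i.1 j.1 := hdist1 i j hij
      have hr0 : (0:ℝ) < dist i.1 j.1 := lt_of_lt_of_le one_pos hr1
      have hrs0 : 0 < dist i.1 j.1 ^ s := rpow_pos_of_pos hr0 s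
      have hm2 : (0:ℝ) < (m:ℝ) + 2 := by positivity
      have hsplit : (Nb ^ (m+1+1) * D') i j = ∑ k, Nb i k * (Nb ^ (m+1) * D') k j := by
        rw [pow_succ', Matrix.mul_assoc, Matrix.mul_apply]
      rw [hsplit, ← Finset.sum_filter_add_sum_filter_not Finset.univ
        (fun k : ↥Λ => dist i.1 j.1 ≤ dist i.1 k.1 * ((m:ℝ)+2)) _]
      set bndL : ℝ := (C * ((m:ℝ)+2) ^ s / dist i.1 j.1 ^ s) * δ⁻¹ with hbndL_def
      set bndS : ℝ := (C / δ^2) * q ^ m * ((m:ℝ)+1) * ((m:ℝ)+2) ^ s / dist i.1 j.1 ^ s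
        with hbndS_def
      have hbndL0 : 0 ≤ bndL := by rw [hbndL_def]; positivity
      have hbndS0 : 0 ≤ bndS := by rw [hbndS_def]; positivity
      have hlong : ∀ k ∈ Finset.univ.filter
          (fun k : ↥Λ => dist i.1 j.1 ≤ dist i.1 k.1 * ((m:ℝ)+2)), Nb i k ≤ bndL := by
        intro k hk
        rw [Finset.mem_filter] at hk
        have hdik : dist i.1 j.1 / ((m:ℝ)+2) ≤ dist i.1 k.1 := by
          rw [div_le_iff₀ hm2]; exact hk.2
        have hdik0 : (0:ℝ) < dist i.1 k.1 := lt_of_lt_of_le (by positivity) hdik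
        have hik : i ≠ k := by
          intro h
          rw [← h, dist_self] at hdik0
          exact lt_irrefl _ hdik0
        have h5 : dist i.1 j.1 ^ s / ((m:ℝ)+2) ^ s ≤ dist i.1 k.1 ^ s := by
          rw [← Real.div_rpow hr0.le hm2.le]
          exact Real.rpow_le_rpow (by positivity) hdik hs0.le
        have h6 : |A i k| ≤ C * ((m:ℝ)+2) ^ s / dist i.1 j.1 ^ s := by
          refine (hdecay i k hik).trans ?_
          have h7 : C / (dist i.1 k.1 ^ s + 1) ≤ C / (dist i.1 j.1 ^ s / ((m:ℝ)+2) ^ s) := by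
            exact div_le_div_of_nonneg_left hC.le (by positivity) (by linarith)
          refine h7.trans ?_
          rw [div_div_eq_mul_div]
        have heq : Nb i k = |A i k| * (A i i)⁻¹ := by
          rw [hNbeq, if_neg hik, div_eq_mul_inv]
        rw [heq, hbndL_def]
        exact mul_le_mul h6 (inv_anti₀ hδ (hAδ i)) (inv_nonneg.mpr (hApos i).le)
          (by positivity)
      have hshort : ∀ k ∈ Finset.univ.filter
          (fun k : ↥Λ => ¬(dist i.1 j.1 ≤ dist i.1 k.1 * ((m:ℝ)+2))),
          (Nb ^ (m+1) * D') k j ≤ bndS := by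
        intro k hk
        rw [Finset.mem_filter] at hk
        have hdik : dist i.1 k.1 < dist i.1 j.1 / ((m:ℝ)+2) := by
          rw [lt_div_iff₀ hm2]; exact lt_of_not_ge hk.2
        have htri : dist i.1 j.1 ≤ dist i.1 k.1 + dist k.1 j.1 := dist_triangle i.1 k.1 j.1
        have hdkj : dist i.1 j.1 * ((m:ℝ)+1) / ((m:ℝ)+2) ≤ dist k.1 j.1 := by
          have hfe : dist i.1 j.1 - dist i.1 j.1 / ((m:ℝ)+2)
              = dist i.1 j.1 * ((m:ℝ)+1) / ((m:ℝ)+2) := by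
            field_simp
            ring
          linarith
        have hdkj0 : (0:ℝ) < dist k.1 j.1 := lt_of_lt_of_le (by positivity) hdkj
        have hkj : k ≠ j := by
          intro h
          rw [h, dist_self] at hdkj0
          exact lt_irrefl _ hdkj0
        have h8 := ih k j hkj
        have h9 : dist i.1 j.1 ^ s * ((m:ℝ)+1) ^ s / ((m:ℝ)+2) ^ s ≤ dist k.1 j.1 ^ s := by
          rw [← Real.mul_rpow hr0.le (by positivity), ← Real.div_rpow (by positivity) hm2.le]
          exact Real.rpow_le_rpow (by positivity) hdkj hs0.le
        have h10 : (C / δ^2) * ((m:ℝ)+1) ^ (s+1) * q ^ m / dist k.1 j.1 ^ s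
            ≤ (C / δ^2) * ((m:ℝ)+1) ^ (s+1) * q ^ m
                / (dist i.1 j.1 ^ s * ((m:ℝ)+1) ^ s / ((m:ℝ)+2) ^ s) := by
          exact div_le_div_of_nonneg_left (by positivity) (by positivity) h9
        have h11 : (C / δ^2) * ((m:ℝ)+1) ^ (s+1) * q ^ m
                / (dist i.1 j.1 ^ s * ((m:ℝ)+1) ^ s / ((m:ℝ)+2) ^ s) = bndS := by
          rw [hbndS_def]
          have hpe : ((m:ℝ)+1) ^ (s+1) = ((m:ℝ)+1) ^ s * ((m:ℝ)+1) :=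
            Real.rpow_add_one (by positivity) s
          have hms : (0:ℝ) < ((m:ℝ)+1) ^ s := by positivity
          rw [hpe, div_div_eq_mul_div]
          field_simp
        exact h8.trans (h10.trans_eq h11)
      have hLsum : ∑ k ∈ Finset.univ.filter
          (fun k : ↥Λ => dist i.1 j.1 ≤ dist i.1 k.1 * ((m:ℝ)+2)),
          Nb i k * (Nb ^ (m+1) * D') k j ≤ bndL * (q ^ (m+1) / δ) := by
        calc ∑ k ∈ Finset.univ.filter
              (fun k : ↥Λ => dist i.1 j.1 ≤ dist i.1 k.1 * ((m:ℝ)+2)),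
              Nb i k * (Nb ^ (m+1) * D') k j
            ≤ ∑ k ∈ Finset.univ.filter
              (fun k : ↥Λ => dist i.1 j.1 ≤ dist i.1 k.1 * ((m:ℝ)+2)),
              bndL * (Nb ^ (m+1) * D') k j :=
              Finset.sum_le_sum fun k hk =>
                mul_le_mul_of_nonneg_right (hlong k hk) (hMn0 _ k j)
          _ ≤ ∑ k, bndL * (Nb ^ (m+1) * D') k j :=
              Finset.sum_le_sum_of_subset_of_nonneg (Finset.filter_subset _ _)
                (fun k _ _ => mul_nonneg hbndL0 (hMn0 _ k j))
          _ = bndL * ∑ k, (Nb ^ (m+1) * D') k j := by rw [Finset.mul_sum]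
          _ ≤ bndL * (q ^ (m+1) / δ) :=
              mul_le_mul_of_nonneg_left (hMncol (m+1) j) hbndL0
      have hSsum : ∑ k ∈ Finset.univ.filter
          (fun k : ↥Λ => ¬(dist i.1 j.1 ≤ dist i.1 k.1 * ((m:ℝ)+2))),
          Nb i k * (Nb ^ (m+1) * D') k j ≤ q * bndS := by
        calc ∑ k ∈ Finset.univ.filter
              (fun k : ↥Λ => ¬(dist i.1 j.1 ≤ dist i.1 k.1 * ((m:ℝ)+2))),
              Nb i k * (Nb ^ (m+1) * D') k j
            ≤ ∑ k ∈ Finset.univ.filter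
              (fun k : ↥Λ => ¬(dist i.1 j.1 ≤ dist i.1 k.1 * ((m:ℝ)+2))),
              Nb i k * bndS :=
              Finset.sum_le_sum fun k hk =>
                mul_le_mul_of_nonneg_left (hshort k hk) (hNb0 i k)
          _ ≤ ∑ k, Nb i k * bndS :=
              Finset.sum_le_sum_of_subset_of_nonneg (Finset.filter_subset _ _)
                (fun k _ _ => mul_nonneg (hNb0 i k) hbndS0)
          _ = (∑ k, Nb i k) * bndS := by rw [Finset.sum_mul]
          _ ≤ q * bndS := mul_le_mul_of_nonneg_right (hNbrow i) hbndS0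
      have hfinal : bndL * (q ^ (m+1) / δ) + q * bndS
          = (C / δ^2) * (((m:ℝ)+1)+1) ^ (s+1) * q ^ (m+1) / dist i.1 j.1 ^ s := by
        rw [hbndL_def, hbndS_def]
        have hpe : ((m:ℝ)+2) ^ (s+1) = ((m:ℝ)+2) ^ s * ((m:ℝ)+2) :=
          Real.rpow_add_one hm2.ne' s
        have hmm : ((m:ℝ)+1)+1 = ((m:ℝ)+2) := by ring
        rw [hmm, hpe, pow_succ]
        field_simp
        ring
      have hcast : (((m+1:ℕ)):ℝ) + 1 = ((m:ℝ)+1)+1 := by push_cast; ring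
      rw [hcast, ← hfinal]
      exact add_le_add hLsum hSsum
  -- FINAL ASSEMBLY
  intro i j
  have hlim : ∀ b : ℝ, (∀ M : ℕ, |A⁻¹ i j| ≤ b + q ^ M * G) → |A⁻¹ i j| ≤ b := by
    intro b hb
    have h1 : Filter.Tendsto (fun M : ℕ => b + q ^ M * G) Filter.atTop (nhds (b + 0 * G)) :=
      tendsto_const_nhds.add
        ((tendsto_pow_atTop_nhds_zero_of_lt_one hq0.le hq1).mul tendsto_const_nhds)
    rw [zero_mul, add_zero] at h1
    exact ge_of_tendsto h1 (Filter.Eventually.of_forall hb)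
  by_cases hij : i = j
  · subst hij
    rw [dist_self, Real.zero_rpow hs0.ne', zero_add, div_one]
    have hb : |A⁻¹ i i| ≤ 1 / (δ * (1 - q)) := by
      apply hlim
      intro M
      have h1 : |A⁻¹ i i| ≤ (∑ n ∈ Finset.range M, |(Nm ^ n * D') i i|) + q ^ M * G := by
        rw [hentry M i i]
        calc |(∑ n ∈ Finset.range M, (Nm ^ n * D') i i) + (Nm ^ M * A⁻¹) i i|
            ≤ |∑ n ∈ Finset.range M, (Nm ^ n * D') i i| + |(Nm ^ M * A⁻¹) i i| :=
              abs_add_le _ _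
          _ ≤ (∑ n ∈ Finset.range M, |(Nm ^ n * D') i i|) + q ^ M * G :=
              add_le_add (Finset.abs_sum_le_sum_abs _ _) (hrem M i i)
      have h2 : ∀ n : ℕ, |(Nm ^ n * D') i i| ≤ q ^ n * δ⁻¹ := by
        intro n
        rw [hNmDentry]
        have ha : |(Nm ^ n) i i| ≤ q ^ n := by
          refine (habspow n i i).trans ?_
          calc (Nb ^ n) i i ≤ ∑ k, (Nb ^ n) i k :=
                Finset.single_le_sum (fun k _ => hNbpow0 n i k) (Finset.mem_univ i)
            _ ≤ q ^ n := hNbrowpow n i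
        exact mul_le_mul ha (inv_anti₀ hδ (hAδ i)) (inv_nonneg.mpr (hApos i).le)
          (by positivity)
      have h3 : ∑ n ∈ Finset.range M, |(Nm ^ n * D') i i| ≤ 1 / (δ * (1 - q)) := by
        calc ∑ n ∈ Finset.range M, |(Nm ^ n * D') i i|
            ≤ ∑ n ∈ Finset.range M, q ^ n * δ⁻¹ := Finset.sum_le_sum fun n _ => h2 n
          _ = (∑ n ∈ Finset.range M, q ^ n) * δ⁻¹ := by rw [Finset.sum_mul]
          _ ≤ (1 - q)⁻¹ * δ⁻¹ := by
              apply mul_le_mul_of_nonneg_right _ (inv_nonneg.mpr hδ.le)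
              rw [← tsum_geometric_of_lt_one hq0.le hq1]
              exact Summable.sum_le_tsum _ (fun n _ => by positivity)
                (summable_geometric_of_lt_one hq0.le hq1)
          _ = 1 / (δ * (1 - q)) := by rw [one_div, mul_inv, mul_comm]
      linarith
    have hge : 0 ≤ 2 * (C / δ^2) * (T2 / q) := by positivity
    have h2 : (0:ℝ) < 1 / (δ * (1 - q)) := by positivity
    rw [hC'_def]
    linarith
  · -- off-diagonal case
    have hr1 : 1 ≤ dist i.1 j.1 := hdist1 i j hij
    have hr0 : (0:ℝ) < dist i.1 j.1 := lt_of_lt_of_le one_pos hr1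
    have hrs0 : 0 < dist i.1 j.1 ^ s := rpow_pos_of_pos hr0 s
    have hrs1 : 1 ≤ dist i.1 j.1 ^ s := by
      calc (1:ℝ) = 1 ^ s := (Real.one_rpow s).symm
      _ ≤ dist i.1 j.1 ^ s := Real.rpow_le_rpow one_pos.le hr1 hs0.le
    have hterm : ∀ n : ℕ, |(Nm ^ n * D') i j|
        ≤ ((C / δ^2) * (1 / (q * dist i.1 j.1 ^ s))) * ((n:ℝ) ^ (k₀+1) * q ^ n) := by
      intro n
      cases n with
      | zero =>
        have h0 : (Nm ^ 0 * D') i j = 0 := by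
          rw [pow_zero, Matrix.one_mul, hD'_def, Matrix.diagonal_apply_ne _ hij]
        rw [h0, abs_zero, Nat.cast_zero, zero_pow (Nat.succ_ne_zero k₀), zero_mul, mul_zero]
      | succ m =>
        have hc1 : |(Nm ^ (m+1) * D') i j| ≤ (Nb ^ (m+1) * D') i j := hNmD_le (m+1) i j
        have hc2 := hkey m i j hij
        have hc3 : (C / δ^2) * ((m:ℝ)+1) ^ (s+1) * q ^ m / dist i.1 j.1 ^ s
            ≤ ((C / δ^2) * (1 / (q * dist i.1 j.1 ^ s)))
              * (((m+1:ℕ):ℝ) ^ (k₀+1) * q ^ (m+1)) := by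
          have hm1 : (1:ℝ) ≤ (m:ℝ)+1 := by
            have := Nat.cast_nonneg (α := ℝ) m
            linarith
          have he : ((m:ℝ)+1) ^ (s+1) ≤ ((m:ℝ)+1) ^ (k₀+1) := by
            have h1 : ((m:ℝ)+1) ^ (s+1) ≤ ((m:ℝ)+1) ^ (((k₀+1 : ℕ)):ℝ) := by
              apply Real.rpow_le_rpow_of_exponent_le hm1
              have hce := Nat.le_ceil s
              rw [hk0_def]
              push_cast
              push_cast at hce
              linarith
            rwa [Real.rpow_natCast] at h1
          have heq : ((C / δ^2) * (1 / (q * dist i.1 j.1 ^ s)))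
              * (((m+1:ℕ):ℝ) ^ (k₀+1) * q ^ (m+1))
              = (C / δ^2) * ((m:ℝ)+1) ^ (k₀+1) * q ^ m / dist i.1 j.1 ^ s := by
            have hcast : ((m+1:ℕ):ℝ) = (m:ℝ)+1 := by push_cast; ring
            rw [hcast, pow_succ q m]
            field_simp
          rw [heq]
          apply (div_le_div_iff_of_pos_right hrs0).mpr
          apply mul_le_mul_of_nonneg_right _ (pow_nonneg hq0.le m)
          exact mul_le_mul_of_nonneg_left he (by positivity)
        calc |(Nm ^ (m+1) * D') i j| ≤ (Nb ^ (m+1) * D') i j := hc1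
          _ ≤ (C / δ^2) * ((m:ℝ)+1) ^ (s+1) * q ^ m / dist i.1 j.1 ^ s := hc2
          _ ≤ _ := hc3
    have hb : |A⁻¹ i j| ≤ (C / δ^2) * (1 / (q * dist i.1 j.1 ^ s)) * T2 := by
      apply hlim
      intro M
      have h1 : |A⁻¹ i j| ≤ (∑ n ∈ Finset.range M, |(Nm ^ n * D') i j|) + q ^ M * G := by
        rw [hentry M i j]
        calc |(∑ n ∈ Finset.range M, (Nm ^ n * D') i j) + (Nm ^ M * A⁻¹) i j|
            ≤ |∑ n ∈ Finset.range M, (Nm ^ n * D') i j| + |(Nm ^ M * A⁻¹) i j| :=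
              abs_add_le _ _
          _ ≤ (∑ n ∈ Finset.range M, |(Nm ^ n * D') i j|) + q ^ M * G :=
              add_le_add (Finset.abs_sum_le_sum_abs _ _) (hrem M i j)
      have h3 : ∑ n ∈ Finset.range M, |(Nm ^ n * D') i j|
          ≤ (C / δ^2) * (1 / (q * dist i.1 j.1 ^ s)) * T2 := by
        calc ∑ n ∈ Finset.range M, |(Nm ^ n * D') i j|
            ≤ ∑ n ∈ Finset.range M,
                ((C / δ^2) * (1 / (q * dist i.1 j.1 ^ s))) * ((n:ℝ) ^ (k₀+1) * q ^ n) :=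
              Finset.sum_le_sum fun n _ => hterm n
          _ = ((C / δ^2) * (1 / (q * dist i.1 j.1 ^ s)))
              * ∑ n ∈ Finset.range M, (n:ℝ) ^ (k₀+1) * q ^ n := by rw [Finset.mul_sum]
          _ ≤ ((C / δ^2) * (1 / (q * dist i.1 j.1 ^ s))) * T2 :=
              mul_le_mul_of_nonneg_left (hT2sum M) (by positivity)
      linarith
    calc |A⁻¹ i j| ≤ (C / δ^2) * (1 / (q * dist i.1 j.1 ^ s)) * T2 := hb
      _ = 2 * (C / δ^2) * (T2 / q) / (2 * dist i.1 j.1 ^ s) := by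
          field_simp
      _ ≤ C' / (2 * dist i.1 j.1 ^ s) := by
          apply (div_le_div_iff_of_pos_right (by positivity)).mpr
          rw [hC'_def]
          have h2 : (0:ℝ) < 1 / (δ * (1 - q)) := by positivity
          linarith
      _ ≤ C' / (dist i.1 j.1 ^ s + 1) :=
          div_le_div_of_nonneg_left hC'0.le (by positivity) (by linarith)

end GibbsLSI
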